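/- Let d ≥ 1, let l : ℝᵈ → ℝ be differentiable with ‖∇l(x)‖₂ ≤ C_l for all x (C_l > 0), let λ > 0, let g : ℝ → ℝ be continuously differentiable and strictly increasing with g(0) = 0, let 𝒞 > 0 satisfy g(𝒞) = 1/λ, and let C_g > 0 satisfy g′(u) ≤ C_g for all u ∈ [0, 𝒞]. Fix M_c > 0 and M_p > 0, set L_c = min{λ M_c / C_l, M_c / (C_l C_g 𝒞)} and L_p = M_p / C_l, and let p : ℝ → ℝ be continuous with 0 ≤ p(t) ≤ min{L_c, L_p} for all t. Let C ∈ ℝ and define c(x) = ∫_{l(x)}^{l(x)+𝒞} g(t − l(x)) p(t) dt and Ŷ(x) = ∫_{C+𝒞}^{l(x)+𝒞} p(t) dt. Then for all x₁, x₂ ∈ ℝᵈ, both |c(x₁) − c(x₂)| ≤ M_c‖x₁ − x₂‖₂ and |Ŷ(x₁) − Ŷ(x₂)| ≤ M_p‖x₁ − x₂‖₂ hold. -/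

import Mathlib

/-- A randomized threshold classifier whose threshold density is bounded by
`min L_c L_p` simultaneously satisfies individual fairness with respect to the
expected best-response cost (constant `M_c`) and with respect to the expected
outcome (constant `M_p`). -/
theorem randomized_classifier_IF_wrt_BRC_and_outcome
    (d : ℕ) (hd : 1 ≤ d)
    (l : EuclideanSpace ℝ (Fin d) → ℝ) (hl_diff : Differentiable ℝ l)
    (C_l : ℝ) (hCl : 0 < C_l) (hl_grad : ∀ x, ‖gradient l x‖ ≤ C_l)
    (lam : ℝ) (hlam : 0 < lam)
    (g : ℝ → ℝ) (hg : ContDiff ℝ 1 g) (hg_mono : StrictMono g) (hg0 : g 0 = 0)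
    (𝒞 : ℝ) (h𝒞 : 0 < 𝒞) (hg𝒞 : g 𝒞 = 1 / lam)
    (C_g : ℝ) (hCg : 0 < C_g) (hg' : ∀ u ∈ Set.Icc (0 : ℝ) 𝒞, deriv g u ≤ C_g)
    (M_c : ℝ) (hMc : 0 < M_c) (M_p : ℝ) (hMp : 0 < M_p)
    (L_c : ℝ) (hLc : L_c = min (lam * M_c / C_l) (M_c / (C_l * C_g * 𝒞)))
    (L_p : ℝ) (hLp : L_p = M_p / C_l)
    (p : ℝ → ℝ) (hp_cont : Continuous p) (hp : ∀ t, 0 ≤ p t ∧ p t ≤ min L_c L_p)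
    (C : ℝ)
    (c : EuclideanSpace ℝ (Fin d) → ℝ)
    (hc : ∀ x, c x = ∫ t in (l x)..(l x + 𝒞), g (t - l x) * p t)
    (Yhat : EuclideanSpace ℝ (Fin d) → ℝ)
    (hY : ∀ x, Yhat x = ∫ t in (C + 𝒞)..(l x + 𝒞), p t) :
    ∀ x₁ x₂, |c x₁ - c x₂| ≤ M_c * ‖x₁ - x₂‖ ∧
      |Yhat x₁ - Yhat x₂| ≤ M_p * ‖x₁ - x₂‖ := by
  set K := min L_c L_p with hKdef
  -- basic bounds
  have hKLc : K ≤ L_c := min_le_left _ _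
  have hKLp : K ≤ L_p := min_le_right _ _
  -- integrability helper
  have hpc : ∀ (f : ℝ → ℝ), Continuous f → ∀ a b : ℝ,
      IntervalIntegrable f MeasureTheory.volume a b :=
    fun f hf a b => hf.intervalIntegrable a b
  -- antiderivative of p
  set P : ℝ → ℝ := fun t => ∫ v in (0:ℝ)..t, p v with hPdef
  have hP : ∀ t, HasDerivAt P (p t) t := fun t =>
    intervalIntegral.integral_hasDerivAt_right (hpc p hp_cont 0 t)
      (hp_cont.stronglyMeasurableAtFilter _ _) hp_cont.continuousAt
  have hPc : Continuous P := by
    rw [continuous_iff_continuousAt]; exact fun t => (hP t).continuousAt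
  have hPsub : ∀ a b : ℝ, (∫ t in a..b, p t) = P b - P a := by
    intro a b
    have h := intervalIntegral.integral_add_adjacent_intervals
      (hpc p hp_cont 0 a) (hpc p hp_cont a b)
    simp only [hPdef]; linarith
  have hPlip : ∀ a b : ℝ, a ≤ b → 0 ≤ P b - P a ∧ P b - P a ≤ K * (b - a) := by
    intro a b hab
    rw [← hPsub]
    constructor
    · exact intervalIntegral.integral_nonneg hab fun u _ => (hp u).1
    · have h1 : (∫ t in a..b, p t) ≤ ∫ t in a..b, K :=
        intervalIntegral.integral_mono_on hab (hpc p hp_cont a b)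
          (intervalIntegrable_const) (fun u _ => (hp u).2)
      simpa [intervalIntegral.integral_const, smul_eq_mul, mul_comm] using h1
  -- Lipschitz bound on l
  have hl_lip : ∀ x y : EuclideanSpace ℝ (Fin d), |l x - l y| ≤ C_l * ‖x - y‖ := by
    intro x y
    have hfd : ∀ z ∈ (Set.univ : Set (EuclideanSpace ℝ (Fin d))), ‖fderiv ℝ l z‖ ≤ C_l := by
      intro z _
      have h1 : ‖gradient l z‖ = ‖fderiv ℝ l z‖ := by
        unfold gradient; exact LinearIsometryEquiv.norm_map _ _
      rw [← h1]; exact hl_grad z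
    have := convex_univ.norm_image_sub_le_of_norm_fderiv_le
      (fun z _ => hl_diff z) hfd (Set.mem_univ y) (Set.mem_univ x)
    simpa [Real.norm_eq_abs] using this
  -- g' facts
  have hgdiff : Differentiable ℝ g := hg.differentiable one_ne_zero
  have hg'cont : Continuous (deriv g) := hg.continuous_deriv le_rfl
  have hg'nonneg : ∀ u : ℝ, 0 ≤ deriv g u := by
    intro u
    have htend := hasDerivAt_iff_tendsto_slope.mp (hgdiff u).hasDerivAt
    refine ge_of_tendsto htend (Filter.Eventually.of_forall ?_)
    intro x
    rcases lt_trichotomy x u with h | h | h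
    · have hgx : g x ≤ g u := (hg_mono.le_iff_le).mpr h.le
      simp only [slope_def_field]
      have heq : (g x - g u) / (x - u) = (g u - g x) / (u - x) := by
        rw [← neg_div_neg_eq]; ring_nf
      rw [heq]
      exact div_nonneg (by linarith) (by linarith)
    · simp [h, slope_def_field]
    · have : g u ≤ g x := (hg_mono.le_iff_le).mpr h.le
      simp only [slope_def_field]
      exact div_nonneg (by linarith) (by linarith)
  have hg'int : (∫ u in (0:ℝ)..𝒞, deriv g u) = g 𝒞 := by
    have := intervalIntegral.integral_deriv_eq_sub
      (f := g) (a := (0:ℝ)) (b := 𝒞) (fun x _ => hgdiff x)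
      (hpc _ hg'cont 0 𝒞)
    rw [this, hg0, sub_zero]
  have hg𝒞pos : 0 < g 𝒞 := by rw [hg𝒞]; positivity
  -- representation of c
  have hrep : ∀ x, c x = g 𝒞 * P (l x + 𝒞) - ∫ u in (0:ℝ)..𝒞, deriv g u * P (l x + u) := by
    intro x
    set s := l x with hs
    have h1 : (∫ t in s..(s+𝒞), g (t - s) * p t) = ∫ u in (0:ℝ)..𝒞, g u * p (s + u) := by
      have h := intervalIntegral.integral_comp_add_right
        (a := (0:ℝ)) (b := 𝒞) (fun t => g (t - s) * p t) s
      simp only [zero_add, add_sub_cancel_right] at h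
      rw [show s + 𝒞 = 𝒞 + s from add_comm s 𝒞, ← h]
      congr 1
      ext u
      rw [add_comm u s]
    have h2 : (∫ u in (0:ℝ)..𝒞, g u * p (s + u))
        = g 𝒞 * P (s + 𝒞) - g 0 * P (s + 0) - ∫ u in (0:ℝ)..𝒞, deriv g u * P (s + u) := by
      have hvint : IntervalIntegrable (fun y : ℝ => p (s + y)) MeasureTheory.volume 0 𝒞 :=
        hpc _ (hp_cont.comp (continuous_const.add continuous_id)) 0 𝒞
      refine intervalIntegral.integral_mul_deriv_eq_deriv_mul
        (u := g) (u' := deriv g) (v := fun y : ℝ => P (s + y)) (v' := fun y : ℝ => p (s + y))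
        (fun y _ => (hgdiff y).hasDerivAt)
        (fun y _ => ?_)
        (hpc _ hg'cont 0 𝒞)
        hvint
      have := (hP (s + y)).comp y ((hasDerivAt_id y).const_add s)
      simpa [Function.comp_def] using this
    rw [hc x, ← hs, h1, h2, hg0]
    ring
  -- main lemma for c, one direction
  have main_c : ∀ x₁ x₂, l x₂ ≤ l x₁ → |c x₁ - c x₂| ≤ M_c * ‖x₁ - x₂‖ := by
    intro x₁ x₂ hle
    set s₁ := l x₁
    set s₂ := l x₂
    set δ := s₁ - s₂ with hδ
    have hδ0 : 0 ≤ δ := by simp [hδ]; linarith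
    have hD : ∀ u : ℝ, 0 ≤ P (s₁ + u) - P (s₂ + u) ∧ P (s₁ + u) - P (s₂ + u) ≤ K * δ := by
      intro u
      have := hPlip (s₂ + u) (s₁ + u) (by linarith)
      constructor
      · exact this.1
      · have h2 := this.2
        have : s₁ + u - (s₂ + u) = δ := by ring
        rwa [this] at h2
    have hcontD : Continuous fun u => deriv g u * (P (s₁ + u) - P (s₂ + u)) := by
      apply hg'cont.mul
      exact (hPc.comp (continuous_const.add continuous_id)).sub
        (hPc.comp (continuous_const.add continuous_id))
    set I := ∫ u in (0:ℝ)..𝒞, deriv g u * (P (s₁ + u) - P (s₂ + u)) with hI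
    have hI0 : 0 ≤ I :=
      intervalIntegral.integral_nonneg h𝒞.le fun u _ =>
        mul_nonneg (hg'nonneg u) (hD u).1
    have hIup : I ≤ g 𝒞 * (K * δ) := by
      have h1 : I ≤ ∫ u in (0:ℝ)..𝒞, deriv g u * (K * δ) := by
        refine intervalIntegral.integral_mono_on h𝒞.le
          (hpc _ hcontD 0 𝒞) (hpc _ (hg'cont.mul continuous_const) 0 𝒞) ?_
        intro u _
        exact mul_le_mul_of_nonneg_left (hD u).2 (hg'nonneg u)
      have h2 : (∫ u in (0:ℝ)..𝒞, deriv g u * (K * δ)) = g 𝒞 * (K * δ) := by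
        rw [intervalIntegral.integral_mul_const, hg'int]
      linarith
    have hT0 : 0 ≤ g 𝒞 * (P (s₁ + 𝒞) - P (s₂ + 𝒞)) :=
      mul_nonneg hg𝒞pos.le (hD 𝒞).1
    have hTup : g 𝒞 * (P (s₁ + 𝒞) - P (s₂ + 𝒞)) ≤ g 𝒞 * (K * δ) :=
      mul_le_mul_of_nonneg_left (hD 𝒞).2 hg𝒞pos.le
    have hdiff : c x₁ - c x₂ = g 𝒞 * (P (s₁ + 𝒞) - P (s₂ + 𝒞)) - I := by
      rw [hrep x₁, hrep x₂, hI]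
      have hsub : (∫ u in (0:ℝ)..𝒞, deriv g u * (P (s₁ + u) - P (s₂ + u)))
          = (∫ u in (0:ℝ)..𝒞, deriv g u * P (s₁ + u))
            - ∫ u in (0:ℝ)..𝒞, deriv g u * P (s₂ + u) := by
        have hint1 : IntervalIntegrable (fun u : ℝ => deriv g u * P (s₁ + u))
            MeasureTheory.volume 0 𝒞 :=
          hpc _ (hg'cont.mul (hPc.comp (continuous_const.add continuous_id))) 0 𝒞
        have hint2 : IntervalIntegrable (fun u : ℝ => deriv g u * P (s₂ + u))
            MeasureTheory.volume 0 𝒞 :=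
          hpc _ (hg'cont.mul (hPc.comp (continuous_const.add continuous_id))) 0 𝒞
        rw [← intervalIntegral.integral_sub hint1 hint2]
        congr 1; ext u; ring
      rw [hsub]; ring
    have habs : |c x₁ - c x₂| ≤ g 𝒞 * (K * δ) := by
      rw [hdiff, abs_le]
      constructor <;> linarith
    -- convert to the final bound
    have hKlamMc : g 𝒞 * K ≤ M_c / C_l := by
      have h1 : K ≤ lam * M_c / C_l := le_trans hKLc (by rw [hLc]; exact min_le_left _ _)
      rw [hg𝒞]
      calc 1 / lam * K ≤ 1 / lam * (lam * M_c / C_l) := by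
            apply mul_le_mul_of_nonneg_left h1 (by positivity)
        _ = M_c / C_l := by field_simp
    have hδle : δ ≤ C_l * ‖x₁ - x₂‖ := by
      have := hl_lip x₁ x₂
      have h2 : δ ≤ |s₁ - s₂| := le_abs_self _
      linarith
    have hKnon : 0 ≤ K := le_trans (hp 0).1 (hp 0).2
    calc |c x₁ - c x₂| ≤ g 𝒞 * (K * δ) := habs
      _ = (g 𝒞 * K) * δ := by ring
      _ ≤ (M_c / C_l) * (C_l * ‖x₁ - x₂‖) := by
          apply mul_le_mul hKlamMc hδle hδ0
          positivity
      _ = M_c * ‖x₁ - x₂‖ := by field_simp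
  -- main lemma for Yhat, one direction
  have main_Y : ∀ x₁ x₂, l x₂ ≤ l x₁ → |Yhat x₁ - Yhat x₂| ≤ M_p * ‖x₁ - x₂‖ := by
    intro x₁ x₂ hle
    have hY1 : Yhat x₁ - Yhat x₂ = P (l x₁ + 𝒞) - P (l x₂ + 𝒞) := by
      rw [hY x₁, hY x₂, hPsub, hPsub]; ring
    have hlip := hPlip (l x₂ + 𝒞) (l x₁ + 𝒞) (by linarith)
    have hKLp' : K ≤ M_p / C_l := by rw [← hLp]; exact hKLp
    have hδle : l x₁ - l x₂ ≤ C_l * ‖x₁ - x₂‖ := by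
      have := hl_lip x₁ x₂
      have h2 : l x₁ - l x₂ ≤ |l x₁ - l x₂| := le_abs_self _
      linarith
    have hKnon : 0 ≤ K := le_trans (hp 0).1 (hp 0).2
    rw [hY1, abs_of_nonneg hlip.1]
    calc P (l x₁ + 𝒞) - P (l x₂ + 𝒞) ≤ K * (l x₁ + 𝒞 - (l x₂ + 𝒞)) := hlip.2
      _ = K * (l x₁ - l x₂) := by ring
      _ ≤ (M_p / C_l) * (C_l * ‖x₁ - x₂‖) := by
          apply mul_le_mul hKLp' hδle (by linarith) (by positivity)
      _ = M_p * ‖x₁ - x₂‖ := by field_simp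
  -- conclude
  intro x₁ x₂
  rcases le_total (l x₂) (l x₁) with h | h
  · exact ⟨main_c x₁ x₂ h, main_Y x₁ x₂ h⟩
  · constructor
    · rw [abs_sub_comm, ← norm_sub_rev x₂ x₁]; exact main_c x₂ x₁ h
    · rw [abs_sub_comm, ← norm_sub_rev x₂ x₁]; exact main_Y x₂ x₁ h
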